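/- Let ν > 0 and let h(φ) = sin(ν(φ − π)) on [0, 2π]. Then h is odd under φ ↦ 2π−φ, solves h'' = −ν²h, and satisfies the Ventsel boundary condition h′(0) = −(π/2)(h(0)/4 + h''(0)) if and only if ν satisfies ν·cos(νπ) = (π/2)·(1/4 − ν²)·sin(νπ). Moreover ν = 1/2 is a solution of this equation, and there is no solution ν in the open interval (0, 1/2). -/

import Mathlib

open Real

private lemma psiDeriv (x : ℝ) :
    HasDerivAt (fun x : ℝ => 8*x*Real.cos x - (π^2 - 4*x^2)*Real.sin x)
      ((4*x^2 + 8 - π^2) * Real.cos x) x := by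
  have h1 : HasDerivAt (fun x : ℝ => 8*x*Real.cos x)
      (8 * Real.cos x + 8*x*(-Real.sin x)) x := by
    exact (((hasDerivAt_id' x).const_mul (8:ℝ)).mul (Real.hasDerivAt_cos x)).congr_deriv (by ring)
  have h2 : HasDerivAt (fun x : ℝ => (π^2 - 4*x^2)*Real.sin x)
      ((-(4*(2*x))) * Real.sin x + (π^2 - 4*x^2) * Real.cos x) x := by
    have : HasDerivAt (fun x : ℝ => π^2 - 4*x^2) (-(4*(2*x))) x := by
      simpa using (((hasDerivAt_pow 2 x).const_mul (4:ℝ)).const_sub (π^2))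
    exact this.mul (Real.hasDerivAt_sin x)
  have := h1.sub h2
  exact this.congr_deriv (by ring)

private lemma psi_neg (x : ℝ) (hx0 : 0 < x) (hx : x < π/2) :
    8*x*Real.cos x - (π^2 - 4*x^2)*Real.sin x < 0 := by
  set Ψ : ℝ → ℝ := fun x => 8*x*Real.cos x - (π^2 - 4*x^2)*Real.sin x with hΨ
  have hpi2 : (8:ℝ) < π^2 := by nlinarith [Real.pi_gt_three]
  set x₀ : ℝ := Real.sqrt ((π^2 - 8)/4) with hx₀def
  have hx₀0 : 0 < x₀ := Real.sqrt_pos.mpr (by linarith)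
  have hx₀sq : x₀^2 = (π^2 - 8)/4 := Real.sq_sqrt (by linarith)
  have hx₀lt : x₀ < π/2 := by
    rw [hx₀def, show ((π^2 - 8)/4 : ℝ) = (π/2)^2 - 2 by ring]
    refine (Real.sqrt_lt' (by positivity)).mpr (by nlinarith)
  have hcont : Continuous Ψ := by fun_prop
  have hΨ0 : Ψ 0 = 0 := by simp [hΨ]
  have hΨpi2 : Ψ (π/2) = 0 := by
    simp [hΨ, Real.cos_pi_div_two, Real.sin_pi_div_two]
    ring
  rcases le_or_gt x x₀ with hle | hgt
  · -- Ψ strictly decreasing on [0, x₀]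
    have hanti : StrictAntiOn Ψ (Set.Icc 0 x₀) := by
      apply strictAntiOn_of_deriv_neg (convex_Icc 0 x₀) (hcont.continuousOn)
      intro y hy
      rw [interior_Icc] at hy
      rw [(psiDeriv y).deriv]
      have hysq : y^2 < x₀^2 := by nlinarith [hy.1, hy.2]
      have hcos : 0 < Real.cos y :=
        Real.cos_pos_of_mem_Ioo ⟨by linarith [hy.1, Real.pi_pos], by linarith [hy.2, hx₀lt]⟩
      have : 4*y^2 + 8 - π^2 < 0 := by nlinarith
      nlinarith
    have := hanti ⟨le_refl 0, le_of_lt hx₀0⟩ ⟨le_of_lt hx0, hle⟩ hx0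
    rw [hΨ0] at this
    exact this
  · -- Ψ strictly increasing on [x₀, π/2]
    have hmono : StrictMonoOn Ψ (Set.Icc x₀ (π/2)) := by
      apply strictMonoOn_of_deriv_pos (convex_Icc x₀ (π/2)) (hcont.continuousOn)
      intro y hy
      rw [interior_Icc] at hy
      rw [(psiDeriv y).deriv]
      have hysq : x₀^2 < y^2 := by nlinarith [hy.1, hy.2, hx₀0]
      have hcos : 0 < Real.cos y :=
        Real.cos_pos_of_mem_Ioo ⟨by linarith [hy.1, hx₀0, Real.pi_pos], hy.2⟩
      have : 0 < 4*y^2 + 8 - π^2 := by nlinarith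
      nlinarith
    have := hmono ⟨le_of_lt hgt, le_of_lt hx⟩ ⟨le_of_lt hx₀lt, le_refl _⟩ hx
    rw [hΨpi2] at this
    exact this

/-- `h(φ) = sin(ν(φ−π))` is odd under `φ ↦ 2π−φ`, solves `h″ = −ν² h`,
satisfies the Ventsel condition `h′(0) = −(π/2)(h(0)/4 + h″(0))` iff
`ν cos(νπ) = (π/2)(1/4 − ν²) sin(νπ)`; moreover `ν = 1/2` solves this equation and
there is no solution in `(0, 1/2)`. -/
theorem stmt8 (ν : ℝ) (hν : 0 < ν) :
    (∀ φ : ℝ, Real.sin (ν * ((2*π - φ) - π)) = - Real.sin (ν * (φ - π))) ∧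
    (∀ φ : ℝ, deriv (deriv (fun ψ => Real.sin (ν * (ψ - π)))) φ
        = -ν^2 * Real.sin (ν * (φ - π))) ∧
    ((deriv (fun ψ => Real.sin (ν * (ψ - π))) 0
        = -(π/2) * (Real.sin (ν * ((0:ℝ) - π)) / 4
            + deriv (deriv (fun ψ => Real.sin (ν * (ψ - π)))) 0))
      ↔ ν * Real.cos (ν * π) = (π/2) * (1/4 - ν^2) * Real.sin (ν * π)) ∧
    ((1/2 : ℝ) * Real.cos ((1/2 : ℝ) * π)
        = (π/2) * (1/4 - (1/2:ℝ)^2) * Real.sin ((1/2 : ℝ) * π)) ∧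
    (ν < 1/2 → ¬ (ν * Real.cos (ν * π) = (π/2) * (1/4 - ν^2) * Real.sin (ν * π))) := by
  have hinner : ∀ ψ : ℝ, HasDerivAt (fun ψ : ℝ => ν * (ψ - π)) ν ψ := fun ψ => by
    simpa using ((hasDerivAt_id ψ).sub_const π).const_mul ν
  have h1 : ∀ ψ : ℝ, HasDerivAt (fun ψ => Real.sin (ν * (ψ - π)))
      (Real.cos (ν * (ψ - π)) * ν) ψ := fun ψ =>
    (Real.hasDerivAt_sin _).comp ψ (hinner ψ)
  have hd1 : deriv (fun ψ => Real.sin (ν * (ψ - π)))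
      = fun ψ => ν * Real.cos (ν * (ψ - π)) := by
    funext ψ
    rw [(h1 ψ).deriv]; ring
  have h2 : ∀ ψ : ℝ, HasDerivAt (fun ψ => ν * Real.cos (ν * (ψ - π)))
      ((-Real.sin (ν * (ψ - π)) * ν) * ν) ψ := fun ψ => by
    simpa [mul_comm, mul_assoc] using
      (((Real.hasDerivAt_cos _).comp ψ (hinner ψ)).const_mul ν)
  have hd2 : ∀ φ : ℝ, deriv (deriv (fun ψ => Real.sin (ν * (ψ - π)))) φ
      = -ν^2 * Real.sin (ν * (φ - π)) := by
    intro φ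
    rw [hd1, (h2 φ).deriv]; ring
  refine ⟨?_, hd2, ?_, ?_, ?_⟩
  · intro φ
    rw [show ν * ((2*π - φ) - π) = -(ν * (φ - π)) by ring, Real.sin_neg]
  · rw [hd2 0, hd1]
    simp only []
    have e1 : ν * ((0:ℝ) - π) = -(ν * π) := by ring
    rw [e1, Real.sin_neg, Real.cos_neg]
    constructor <;> intro h <;> nlinarith [h]
  · rw [show (1/2:ℝ) * π = π/2 by ring, Real.cos_pi_div_two]
    ring
  · intro hlt heq
    have hx0 : 0 < ν * π := by positivity
    have hx1 : ν * π < π / 2 := by nlinarith [Real.pi_pos]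
    have hneg := psi_neg (ν * π) hx0 hx1
    have h0 : 8*(ν*π)*Real.cos (ν*π) - (π^2 - 4*(ν*π)^2)*Real.sin (ν*π) = 0 := by
      linear_combination (8*π) * heq
    linarith
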